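/- Let r ≥ 2 and let s ∈ ℂ with Re s > 1. Then ζ_{r−1}(s,…,s) · ζ(s) = r · ζ_r(s,…,s) + Σ_{i=1}^{r−1} ζ_{r−1}(s,…,s, 2s, s,…,s), where in the i-th summand the argument 2s occupies the i-th position among the r−1 variables. -/

import Mathlib

/-- The Euler–Zagier `r`-ple zeta-function, defined by its multiple series
`ζ_r(s) = ∑_{0 < m₁ < ⋯ < m_r} m₁^{-s₁} ⋯ m_r^{-s_r}`, written via the substitution
`m_j = n₁ + ⋯ + n_j` with `n : Fin r → ℕ+`. -/
noncomputable def eulerZagierZeta {r : ℕ} (s : Fin r → ℂ) : ℂ :=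
  ∑' n : Fin r → ℕ+, ∏ j : Fin r, (((∑ i ∈ Finset.Iic j, (n i : ℕ)) : ℂ) ^ (-(s j)))

open Finset Function
open scoped Classical

namespace EZAux

/-- Partial sums map. -/
def pSum {r : ℕ} (n : Fin r → ℕ+) (j : Fin r) : ℕ+ :=
  ⟨∑ i ∈ Finset.Iic j, (n i : ℕ),
    Finset.sum_pos (fun i _ => (n i).pos) ⟨j, Finset.mem_Iic.2 le_rfl⟩⟩

lemma pSum_strictMono {r : ℕ} (n : Fin r → ℕ+) : StrictMono (pSum n) := by
  intro a b hab
  rw [← PNat.coe_lt_coe]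
  exact Finset.sum_lt_sum_of_subset (Finset.Iic_subset_Iic.2 hab.le)
    (Finset.mem_Iic.2 le_rfl) (by simpa using hab.not_ge) (n b).pos
    (fun j _ _ => Nat.zero_le _)

lemma pSum_injective {r : ℕ} : Function.Injective (pSum (r := r)) := by
  intro n n' h
  have hS : ∀ j : Fin r, ∑ i ∈ Finset.Iic j, (n i : ℕ) = ∑ i ∈ Finset.Iic j, (n' i : ℕ) :=
    fun j => congrArg PNat.val (congrFun h j)
  funext j
  apply PNat.coe_injective
  obtain ⟨v, hv⟩ := j
  match v with
  | 0 =>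
    have h0 : Finset.Iic (⟨0, hv⟩ : Fin r) = {⟨0, hv⟩} := by
      ext i; simp [Fin.le_def, Fin.ext_iff, Nat.le_zero]
    have := hS ⟨0, hv⟩
    rwa [h0, Finset.sum_singleton, Finset.sum_singleton] at this
  | v + 1 =>
    have hv' : v < r := Nat.lt_of_succ_lt hv
    have hins : Finset.Iic (⟨v + 1, hv⟩ : Fin r)
        = insert ⟨v + 1, hv⟩ (Finset.Iic ⟨v, hv'⟩) := by
      ext i; simp [Fin.le_def, Fin.ext_iff]; omega
    have hnot : (⟨v + 1, hv⟩ : Fin r) ∉ Finset.Iic (⟨v, hv'⟩ : Fin r) := by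
      simp [Fin.le_def]
    have h1 := hS ⟨v + 1, hv⟩
    rw [hins, Finset.sum_insert hnot, Finset.sum_insert hnot, hS ⟨v, hv'⟩] at h1
    exact Nat.add_right_cancel h1

lemma exists_pSum {r : ℕ} (m : Fin r → ℕ+) (hm : StrictMono m) : ∃ n, pSum n = m := by
  have hpos : ∀ j : Fin r, ¬ (j : ℕ) = 0 →
      (m ⟨(j : ℕ) - 1, lt_of_le_of_lt (Nat.sub_le _ _) j.isLt⟩ : ℕ) < m j := by
    intro j hj
    exact_mod_cast hm (by rw [Fin.lt_def]; simp; omega)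
  refine ⟨fun j => if h : (j : ℕ) = 0 then m j else
      ⟨(m j : ℕ) - (m ⟨(j : ℕ) - 1, lt_of_le_of_lt (Nat.sub_le _ _) j.isLt⟩ : ℕ),
        Nat.sub_pos_of_lt (hpos j h)⟩, ?_⟩
  set n : Fin r → ℕ+ := fun j => if h : (j : ℕ) = 0 then m j else
      ⟨(m j : ℕ) - (m ⟨(j : ℕ) - 1, lt_of_le_of_lt (Nat.sub_le _ _) j.isLt⟩ : ℕ),
        Nat.sub_pos_of_lt (hpos j h)⟩ with hn
  have key : ∀ v, ∀ hv : v < r, ∑ i ∈ Finset.Iic (⟨v, hv⟩ : Fin r), (n i : ℕ) = m ⟨v, hv⟩ := by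
    intro v
    induction v with
    | zero =>
      intro hv
      have h0 : Finset.Iic (⟨0, hv⟩ : Fin r) = {⟨0, hv⟩} := by
        ext i; simp [Fin.le_def, Fin.ext_iff, Nat.le_zero]
      rw [h0, Finset.sum_singleton, hn]
      simp
    | succ v ih =>
      intro hv
      have hv' : v < r := Nat.lt_of_succ_lt hv
      have hins : Finset.Iic (⟨v + 1, hv⟩ : Fin r)
          = insert ⟨v + 1, hv⟩ (Finset.Iic ⟨v, hv'⟩) := by
        ext i; simp [Fin.le_def, Fin.ext_iff]; omega
      have hnot : (⟨v + 1, hv⟩ : Fin r) ∉ Finset.Iic (⟨v, hv'⟩ : Fin r) := by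
        simp [Fin.le_def]
      rw [hins, Finset.sum_insert hnot, ih hv']
      have hne : ¬ ((⟨v + 1, hv⟩ : Fin r) : ℕ) = 0 := by simp
      have hle : (m ⟨v, hv'⟩ : ℕ) ≤ m ⟨v + 1, hv⟩ :=
        le_of_lt (by exact_mod_cast hm (by rw [Fin.lt_def]; simp))
      rw [hn]
      simp only [hne, dif_neg, not_false_iff]
      show (m ⟨v + 1, hv⟩ : ℕ) - (m ⟨v + 1 - 1, _⟩ : ℕ) + (m ⟨v, hv'⟩ : ℕ) = _
      simp only [Nat.add_sub_cancel]
      omega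
  funext j
  apply PNat.coe_injective
  obtain ⟨v, hv⟩ := j
  exact key v hv

lemma support_subset {r : ℕ} (f : (Fin r → ℕ+) → ℂ) (hf : ∀ m, f m ≠ 0 → StrictMono m) :
    Function.support f ⊆ Set.range (pSum (r := r)) := by
  intro m hm
  exact exists_pSum m (hf m hm)

/-- The indicator form of the multiple zeta summand. -/
noncomputable def ind {r : ℕ} (s : Fin r → ℂ) (m : Fin r → ℕ+) : ℂ :=
  if StrictMono m then ∏ j, ((m j : ℕ) : ℂ) ^ (-(s j)) else 0

lemma ez_eq {r : ℕ} (s : Fin r → ℂ) :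
    eulerZagierZeta s = ∑' m : Fin r → ℕ+, ind s m := by
  rw [eulerZagierZeta,
    ← Function.Injective.tsum_eq pSum_injective
      (support_subset (ind s) (fun m hm => by
        by_contra h; rw [ind, if_neg h] at hm; exact hm rfl))]
  refine tsum_congr fun n => ?_
  rw [ind, if_pos (pSum_strictMono n)]
  refine Finset.prod_congr rfl fun j _ => ?_
  congr 1
  show _ = ((∑ i ∈ Finset.Iic j, (n i : ℕ) : ℕ) : ℂ)
  push_cast
  rfl


lemma summable_base {σ : ℝ} (hσ : 1 < σ) :
    Summable (fun t : ℕ+ => ((t : ℕ) : ℝ) ^ (-σ)) :=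
  (Real.summable_nat_rpow.2 (by linarith)).comp_injective PNat.coe_injective

lemma summable_pi {σ : ℝ} (hσ : 1 < σ) :
    (r : ℕ) → Summable (fun m : Fin r → ℕ+ => ∏ j, ((m j : ℕ) : ℝ) ^ (-σ)) := by
  intro r
  induction r with
  | zero => exact (hasSum_fintype _).summable
  | succ r ih =>
    have h := (summable_base hσ).mul_of_nonneg ih
      (fun t => Real.rpow_nonneg (by positivity) _)
      (fun m => Finset.prod_nonneg fun j _ => Real.rpow_nonneg (by positivity) _)
    have hi : Function.Injective
        (fun m : Fin (r + 1) → ℕ+ => ((m 0, Fin.tail m) : ℕ+ × (Fin r → ℕ+))) := by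
      intro a b hab
      have h1 : a 0 = b 0 := congrArg Prod.fst hab
      have h2 : Fin.tail a = Fin.tail b := congrArg Prod.snd hab
      funext j
      rcases Fin.eq_zero_or_eq_succ j with rfl | ⟨j', rfl⟩
      · exact h1
      · exact congrFun h2 j'
    have h2 := h.comp_injective hi
    apply h2.congr
    intro m
    show _ = ∏ j : Fin (r + 1), ((m j : ℕ) : ℝ) ^ (-σ)
    rw [Fin.prod_univ_succ]
    rfl

lemma norm_cpow {t : ℕ+} {w : ℂ} : ‖((t : ℕ) : ℂ) ^ (-w)‖ = ((t : ℕ) : ℝ) ^ (-w.re) := by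
  rw [Complex.norm_natCast_cpow_of_pos t.pos]
  simp

lemma summable_ind_aux {r : ℕ} {s : Fin r → ℂ} {σ : ℝ} (hσ : 1 < σ)
    (hs : ∀ j, σ ≤ (s j).re) :
    Summable (fun m : Fin r → ℕ+ => ‖∏ j, ((m j : ℕ) : ℂ) ^ (-(s j))‖) := by
  refine Summable.of_nonneg_of_le (fun m => norm_nonneg _) (fun m => ?_) (summable_pi hσ r)
  rw [norm_prod]
  refine Finset.prod_le_prod (fun j _ => norm_nonneg _) (fun j _ => ?_)
  rw [norm_cpow]
  refine Real.rpow_le_rpow_of_exponent_le (by exact_mod_cast (m j).one_le) (by simpa using hs j)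


variable {k : ℕ}

lemma sm_of_sm_insert {m : Fin k → ℕ+} {t : ℕ+} {i : Fin (k + 1)}
    (h : StrictMono (i.insertNth t m)) : StrictMono m := by
  have : m = (i.insertNth t m) ∘ i.succAbove := by
    funext j; simp [Fin.insertNth_apply_succAbove]
  rw [this]
  exact h.comp (Fin.strictMono_succAbove i)

lemma sm_insert_iff {m : Fin k → ℕ+} {t : ℕ+} {i : Fin (k + 1)}
    (hm : StrictMono m) (ht : ∀ j, t ≠ m j) :
    StrictMono (i.insertNth t m) ↔ ∀ j : Fin k, (m j < t ↔ j.castSucc < i) := by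
  constructor
  · intro h j
    constructor
    · intro hjt
      by_contra hji
      push_neg at hji
      -- i ≤ castSucc j, so i < succAbove i j and insertNth at succAbove is m j
      have h1 : i < i.succAbove j := (Fin.lt_succAbove_iff_le_castSucc i j).2 hji
      have h2 := h h1
      rw [Fin.insertNth_apply_same, Fin.insertNth_apply_succAbove] at h2
      exact absurd (h2.trans hjt) (lt_irrefl _)
    · intro hji
      have h1 : i.succAbove j < i := (Fin.succAbove_lt_iff_castSucc_lt i j).2 hji
      have h2 := h h1
      rwa [Fin.insertNth_apply_same, Fin.insertNth_apply_succAbove] at h2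
  · intro hc
    intro a b hab
    rcases eq_or_ne a i with rfl | ha
    · obtain ⟨jb, rfl⟩ := Fin.exists_succAbove_eq (Fin.ne_of_gt hab)
      rw [Fin.insertNth_apply_same, Fin.insertNth_apply_succAbove]
      have : a ≤ jb.castSucc := (Fin.lt_succAbove_iff_le_castSucc a jb).1 hab
      have hnot : ¬ jb.castSucc < a := not_lt.2 this
      have := (not_iff_not.2 (hc jb)).2 hnot
      rcases lt_or_eq_of_le (not_lt.1 this) with h | h
      · exact h
      · exact absurd h (ht jb)
    · obtain ⟨ja, rfl⟩ := Fin.exists_succAbove_eq ha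
      rcases eq_or_ne b i with rfl | hb
      · rw [Fin.insertNth_apply_same, Fin.insertNth_apply_succAbove]
        exact (hc ja).2 ((Fin.succAbove_lt_iff_castSucc_lt b ja).1 hab)
      · obtain ⟨jb, rfl⟩ := Fin.exists_succAbove_eq hb
        rw [Fin.insertNth_apply_succAbove, Fin.insertNth_apply_succAbove]
        exact hm ((Fin.succAbove_lt_succAbove_iff).1 hab)

lemma key_comb (m : Fin k → ℕ+) (t : ℕ+) (H : ℂ) :
    (if StrictMono m then H else 0) =
      (∑ i : Fin (k + 1), if StrictMono (i.insertNth t m) then H else 0) +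
      (∑ i : Fin k, if (StrictMono m ∧ t = m i) then H else 0) := by
  by_cases hm : StrictMono m
  · rw [if_pos hm]
    by_cases ht : ∃ i₀, t = m i₀
    · obtain ⟨i₀, hi₀⟩ := ht
      have hfirst : (∑ i : Fin (k + 1), if StrictMono (i.insertNth t m) then H else 0) = 0 := by
        refine Finset.sum_eq_zero fun i _ => if_neg fun h => ?_
        have h1 : Fin.insertNth (α := fun _ => ℕ+) i t m (i.succAbove i₀) = t := by
          rw [Fin.insertNth_apply_succAbove, hi₀]
        have h2 : Fin.insertNth (α := fun _ => ℕ+) i t m i = t := by simp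
        exact Fin.succAbove_ne i i₀ (h.injective (h1.trans h2.symm))
      have hsecond : (∑ i : Fin k, if (StrictMono m ∧ t = m i) then H else 0) = H := by
        have hiff : ∀ i : Fin k, ((StrictMono m ∧ t = m i) ↔ i = i₀) := by
          intro i
          constructor
          · rintro ⟨-, hti⟩
            exact hm.injective (by rw [← hti, hi₀])
          · rintro rfl
            exact ⟨hm, hi₀⟩
        rw [Finset.sum_congr rfl (fun i _ => if_congr (hiff i) rfl rfl),
          Finset.sum_ite_eq' univ i₀ (fun _ => H), if_pos (Finset.mem_univ i₀)]
      rw [hfirst, hsecond, zero_add]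
    · push_neg at ht
      have hsecond : (∑ i : Fin k, if (StrictMono m ∧ t = m i) then H else 0) = 0 :=
        Finset.sum_eq_zero fun i _ => if_neg (by rintro ⟨-, h⟩; exact ht i h)
      set c := #(univ.filter (fun j : Fin k => m j < t)) with hc
      have hck : c ≤ k := le_trans (Finset.card_filter_le _ _) (by simp)
      set istar : Fin (k + 1) := ⟨c, Nat.lt_succ_of_le hck⟩ with histar
      have hchar : ∀ j : Fin k, (m j < t ↔ (j : ℕ) < c) := by
        intro j
        constructor
        · intro hj
          have hsub : Finset.Iic j ⊆ univ.filter (fun j' : Fin k => m j' < t) := by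
            intro j' hj'
            simp only [Finset.mem_filter, Finset.mem_univ, true_and]
            exact lt_of_le_of_lt (hm.monotone (Finset.mem_Iic.1 hj')) hj
          have := Finset.card_le_card hsub
          rw [Fin.card_Iic] at this
          omega
        · intro hj
          by_contra hnot
          have htj : t < m j := lt_of_le_of_ne (not_lt.1 hnot) (ht j)
          have hsub : univ.filter (fun j' : Fin k => m j' < t) ⊆ Finset.Iio j := by
            intro j' hj'
            simp only [Finset.mem_filter, Finset.mem_univ, true_and] at hj'
            exact Finset.mem_Iio.2 (hm.lt_iff_lt.1 (hj'.trans htj))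
          have := Finset.card_le_card hsub
          rw [Fin.card_Iio] at this
          omega
      have hiff : ∀ i : Fin (k + 1), (StrictMono (i.insertNth t m) ↔ i = istar) := by
        intro i
        rw [sm_insert_iff hm ht]
        constructor
        · intro h
          have hval : ∀ j : Fin k, ((j : ℕ) < c ↔ (j : ℕ) < (i : ℕ)) := by
            intro j
            rw [← hchar j, h j, Fin.lt_def]
            simp
          rcases lt_trichotomy (i : ℕ) c with hlt | heq | hgt
          · exact absurd ((hval ⟨(i : ℕ), lt_of_lt_of_le hlt hck⟩).1 hlt)
              (by simp)
          · exact Fin.ext (by rw [heq, histar])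
          · have hck' : c < k := lt_of_lt_of_le hgt (Nat.lt_succ_iff.1 i.isLt)
            exact absurd ((hval ⟨c, hck'⟩).2 hgt) (by simp)
        · rintro rfl
          intro j
          rw [hchar j, Fin.lt_def]
          simp [histar]
      have hfirst : (∑ i : Fin (k + 1), if StrictMono (i.insertNth t m) then H else 0) = H := by
        rw [Finset.sum_congr rfl (fun i _ => if_congr (hiff i) rfl rfl),
          Finset.sum_ite_eq' univ istar (fun _ => H), if_pos (Finset.mem_univ istar)]
      rw [hfirst, hsecond, add_zero]
  · rw [if_neg hm]
    have h1 : (∑ i : Fin (k + 1), if StrictMono (i.insertNth t m) then H else 0) = 0 :=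
      Finset.sum_eq_zero fun i _ => if_neg (fun h => hm (sm_of_sm_insert h))
    have h2 : (∑ i : Fin k, if (StrictMono m ∧ t = m i) then H else 0) = 0 :=
      Finset.sum_eq_zero fun i _ => if_neg (by rintro ⟨h, -⟩; exact hm h)
    rw [h1, h2, add_zero]

lemma zeta_pnat {s : ℂ} (hs : 1 < s.re) :
    riemannZeta s = ∑' t : ℕ+, ((t : ℕ) : ℂ) ^ (-s) := by
  have hsne : s ≠ 0 := fun h => by simp [h] at hs; linarith
  rw [zeta_eq_tsum_one_div_nat_cpow hs,
    ← Function.Injective.tsum_eq (PNat.coe_injective) (f := fun n : ℕ => 1 / (n : ℂ) ^ s) ?_]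
  · exact tsum_congr fun t => by rw [one_div, ← Complex.cpow_neg]
  · intro x hx
    rcases Nat.eq_zero_or_pos x with rfl | hpos
    · exfalso
      apply hx
      simp [Complex.zero_cpow hsne]
    · exact ⟨⟨x, hpos⟩, rfl⟩

end EZAux

namespace EZAux

lemma summable_norm_ind {r : ℕ} {s : Fin r → ℂ} {σ : ℝ} (hσ : 1 < σ)
    (hs : ∀ j, σ ≤ (s j).re) :
    Summable (fun m : Fin r → ℕ+ => ‖ind s m‖) := by
  refine Summable.of_nonneg_of_le (fun m => norm_nonneg _) (fun m => ?_)
    (summable_ind_aux hσ hs)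
  rw [ind]
  by_cases h : StrictMono m
  · rw [if_pos h]
  · rw [if_neg h, norm_zero]
    exact norm_nonneg _

end EZAux


/-- For `r = k + 1 ≥ 2` and `Re s > 1`:
`ζ_{r-1}(s,…,s) ζ(s) = r ζ_r(s,…,s) + ∑_{i=1}^{r-1} ζ_{r-1}(s,…,s,2s,s,…,s)`,
where in the `i`-th summand the argument `2s` occupies the `i`-th position. -/
theorem statement6 (k : ℕ) (hk : 1 ≤ k) (s : ℂ) (hs : 1 < s.re) :
    eulerZagierZeta (fun _ : Fin k => s) * riemannZeta s =
      ((k : ℂ) + 1) * eulerZagierZeta (fun _ : Fin (k + 1) => s) +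
        ∑ i : Fin k, eulerZagierZeta (Function.update (fun _ : Fin k => s) i (2 * s)) := by
  classical
  set H : (Fin k → ℕ+) × ℕ+ → ℂ :=
    fun p => (∏ j, ((p.1 j : ℕ) : ℂ) ^ (-s)) * ((p.2 : ℕ) : ℂ) ^ (-s) with hH
  set B : (Fin k → ℕ+) × ℕ+ → ℝ :=
    fun p => (∏ j, ((p.1 j : ℕ) : ℝ) ^ (-s.re)) * ((p.2 : ℕ) : ℝ) ^ (-s.re) with hBdef
  have hBsum : Summable B :=
    (EZAux.summable_pi hs k).mul_of_nonneg (EZAux.summable_base hs)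
      (fun m => Finset.prod_nonneg fun j _ => Real.rpow_nonneg (by positivity) _)
      (fun t => Real.rpow_nonneg (by positivity) _)
  have hnormH : ∀ p, ‖H p‖ = B p := by
    intro p
    simp only [hH, hBdef, norm_mul, norm_prod]
    congr 1
    · exact Finset.prod_congr rfl fun j _ => EZAux.norm_cpow
    · exact EZAux.norm_cpow
  have hbound : ∀ (p : (Fin k → ℕ+) × ℕ+) (c : Prop) (inst : Decidable c),
      ‖@ite _ c inst (H p) 0‖ ≤ B p := by
    intro p c inst
    by_cases h : c
    · rw [if_pos h, hnormH p]
    · rw [if_neg h, norm_zero, ← hnormH p]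
      exact norm_nonneg _
  have hsum1 : ∀ i : Fin (k + 1), Summable
      (fun p : (Fin k → ℕ+) × ℕ+ => if StrictMono (i.insertNth p.2 p.1) then H p else 0) :=
    fun i => Summable.of_norm_bounded hBsum (fun p => hbound p _ _)
  have hsum2 : ∀ i : Fin k, Summable
      (fun p : (Fin k → ℕ+) × ℕ+ => if (StrictMono p.1 ∧ p.2 = p.1 i) then H p else 0) :=
    fun i => Summable.of_norm_bounded hBsum (fun p => hbound p _ _)
  -- Step A : the left-hand side as a double sum
  have hA : eulerZagierZeta (fun _ : Fin k => s) * riemannZeta s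
      = ∑' p : (Fin k → ℕ+) × ℕ+, (if StrictMono p.1 then H p else 0) := by
    rw [EZAux.ez_eq, EZAux.zeta_pnat hs]
    rw [tsum_mul_tsum_of_summable_norm
      (EZAux.summable_norm_ind hs (fun j => le_refl _))
      ((EZAux.summable_base hs).congr (fun t => (EZAux.norm_cpow).symm))]
    refine tsum_congr fun p => ?_
    rw [EZAux.ind]
    by_cases h : StrictMono p.1
    · rw [if_pos h, if_pos h, hH]
    · rw [if_neg h, if_neg h, zero_mul]
  -- Step B : the (k+1)-fold zeta
  have hB1 : ∀ i : Fin (k + 1), eulerZagierZeta (fun _ : Fin (k + 1) => s)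
      = ∑' p : (Fin k → ℕ+) × ℕ+, (if StrictMono (i.insertNth p.2 p.1) then H p else 0) := by
    intro i
    rw [EZAux.ez_eq]
    have e1 := ((Fin.insertNthEquiv (fun _ : Fin (k + 1) => ℕ+) i).tsum_eq
      (EZAux.ind (fun _ : Fin (k + 1) => s))).symm
    have e2 := ((Equiv.prodComm (Fin k → ℕ+) ℕ+).tsum_eq
      (fun q : ℕ+ × (Fin k → ℕ+) =>
        EZAux.ind (fun _ : Fin (k + 1) => s)
          ((Fin.insertNthEquiv (fun _ : Fin (k + 1) => ℕ+) i) q))).symm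
    rw [e1, e2]
    refine tsum_congr fun p => ?_
    have heq : (Fin.insertNthEquiv (fun _ : Fin (k + 1) => ℕ+) i)
        ((Equiv.prodComm (Fin k → ℕ+) ℕ+) p) = i.insertNth p.2 p.1 := rfl
    rw [heq, EZAux.ind]
    by_cases h : StrictMono (i.insertNth p.2 p.1)
    · rw [if_pos h, if_pos h, hH]
      rw [Fin.prod_univ_succAbove
        (fun j => (((i.insertNth p.2 p.1 : Fin (k + 1) → ℕ+) j : ℕ) : ℂ) ^ (-s)) i]
      simp only [Fin.insertNth_apply_same, Fin.insertNth_apply_succAbove]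
      ring
    · rw [if_neg h, if_neg h]
  -- Step C : the 2s-terms
  have hC : ∀ i : Fin k, eulerZagierZeta (Function.update (fun _ : Fin k => s) i (2 * s))
      = ∑' p : (Fin k → ℕ+) × ℕ+, (if (StrictMono p.1 ∧ p.2 = p.1 i) then H p else 0) := by
    intro i
    rw [EZAux.ez_eq]
    rw [Summable.tsum_prod' (hsum2 i) (fun m => (hsum2 i).prod_factor m)]
    refine tsum_congr fun m => ?_
    rw [tsum_eq_single (m i) ?_]
    · rw [EZAux.ind]
      by_cases h : StrictMono m
      · rw [if_pos h, if_pos ⟨h, rfl⟩, hH]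
        have hfac : ∀ j : Fin k,
            ((m j : ℕ) : ℂ) ^ (-(Function.update (fun _ : Fin k => s) i (2 * s) j))
            = ((m j : ℕ) : ℂ) ^ (-s) * (if j = i then ((m j : ℕ) : ℂ) ^ (-s) else 1) := by
          intro j
          rcases eq_or_ne j i with rfl | hj
          · rw [Function.update_self, if_pos rfl,
              ← Complex.cpow_add _ _ (by exact_mod_cast (m j).pos.ne')]
            congr 1
            ring
          · rw [Function.update_of_ne hj, if_neg hj, mul_one]
        rw [Finset.prod_congr rfl (fun j _ => hfac j), Finset.prod_mul_distrib,
          Finset.prod_ite_eq' univ i (fun j => ((m j : ℕ) : ℂ) ^ (-s)),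
          if_pos (Finset.mem_univ i)]
      · rw [if_neg h, if_neg (by rintro ⟨h', -⟩; exact h h')]
    · intro t htne
      rw [if_neg (by rintro ⟨-, h⟩; exact htne h)]
  -- Assemble
  rw [hA]
  have hpoint : ∀ p : (Fin k → ℕ+) × ℕ+,
      (if StrictMono p.1 then H p else 0)
        = (∑ i : Fin (k + 1), if StrictMono (i.insertNth p.2 p.1) then H p else 0)
          + (∑ i : Fin k, if (StrictMono p.1 ∧ p.2 = p.1 i) then H p else 0) :=
    fun p => EZAux.key_comb p.1 p.2 (H p)
  rw [tsum_congr hpoint]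
  rw [Summable.tsum_add (summable_sum (fun i _ => hsum1 i)) (summable_sum (fun i _ => hsum2 i))]
  rw [Summable.tsum_finsetSum (fun i _ => hsum1 i), Summable.tsum_finsetSum (fun i _ => hsum2 i)]
  rw [Finset.sum_congr rfl (fun i _ => (hB1 i).symm),
    Finset.sum_congr rfl (fun i _ => (hC i).symm)]
  rw [Finset.sum_const, Finset.card_univ, Fintype.card_fin, nsmul_eq_mul]
  push_cast
  ring
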